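/- Synchronous incremental voting on K_n with three consecutive opinions: suppose X_v(0) ∈ {1,2,3} for all v. Then for every t ≥ 0, E[N₁(t+1)·N₃(t+1) | X(t)] ≤ (1 − (N₁(t)+N₃(t))/(2n))·N₁(t)·N₃(t). -/

import Mathlib

/-!
STATEMENT 12: Synchronous incremental voting on `K_n` with three consecutive opinions:
if all opinions lie in `{1,2,3}`, then for every `t ≥ 0`,
`E[N₁(t+1)·N₃(t+1) | X(t)] ≤ (1 − (N₁(t)+N₃(t))/(2n))·N₁(t)·N₃(t)`.

Since the process is a time-homogeneous Markov chain and opinions stay in `{1,2,3}`,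
this is formalized as the corresponding inequality for the one-step transition
distribution from an arbitrary configuration with opinions in `{1,2,3}`.
-/

namespace KnSync12


/-- The incremental voting update rule. -/
def updateRule (a b : ℤ) : ℤ := if a < b then a + 1 else if b < a then a - 1 else a

/-- Expected value of a real-valued function under a probability mass function. -/
noncomputable def expVal {α : Type*} (p : PMF α) (f : α → ℝ) : ℝ :=
  ∑' a, (p a).toReal * f a

/-- One step of synchronous incremental voting on `K_n`. -/
noncomputable def step (n : ℕ) [NeZero n] (x : Fin n → ℤ) : PMF (Fin n → ℤ) :=
  (PMF.uniformOfFintype (Fin n → Fin n)).map fun c => fun v => updateRule (x v) (x (c v))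

/-- `count n i x` is `N_i`: the number of vertices holding opinion `i`. -/
def count (n : ℕ) (i : ℤ) (x : Fin n → ℤ) : ℕ :=
  (Finset.univ.filter fun v => x v = i).card

section Aux

open Finset

lemma expVal_map' {α β : Type*} [Fintype α] (p : PMF α) (g : α → β) (f : β → ℝ) :
    expVal (p.map g) f = ∑ a, (p a).toReal * f (g a) := by
  classical
  unfold expVal
  have h1 : ∀ b, ((p.map g) b).toReal * f b
      = ∑ a, if b = g a then (p a).toReal * f (g a) else 0 := by
    intro b
    rw [PMF.map_apply, tsum_fintype, ENNReal.toReal_sum (by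
      intro a _; split <;> simp [PMF.apply_ne_top])]
    rw [Finset.sum_mul]
    refine Finset.sum_congr rfl fun a _ => ?_
    split
    · next h => simp [h]
    · simp
  simp_rw [h1]
  rw [Summable.tsum_finsetSum (fun a _ => ⟨_, hasSum_ite_eq (g a) _⟩)]
  refine Finset.sum_congr rfl fun a _ => ?_
  exact tsum_ite_eq (g a) _

lemma sum_pair' {n : ℕ} (φ ψ : Fin n → ℝ) {v w : Fin n} (hvw : v ≠ w) :
    ∑ c : Fin n → Fin n, φ (c v) * ψ (c w)
      = (n:ℝ)^(n-2) * ((∑ a, φ a) * (∑ b, ψ b)) := by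
  classical
  set h : Fin n → Fin n → ℝ := fun u a => if u = v then φ a else if u = w then ψ a else 1 with hh
  have hw : w ∈ Finset.univ.erase v := Finset.mem_erase.2 ⟨hvw.symm, Finset.mem_univ w⟩
  have hcard : ((Finset.univ.erase v).erase w).card = n - 2 := by
    rw [Finset.card_erase_of_mem hw, Finset.card_erase_of_mem (Finset.mem_univ v)]
    simp [Fintype.card_fin]
    omega
  have claim1 : ∀ c : Fin n → Fin n, ∏ u, h u (c u) = φ (c v) * ψ (c w) := by
    intro c
    rw [← Finset.mul_prod_erase Finset.univ _ (Finset.mem_univ v),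
        ← Finset.mul_prod_erase _ _ hw]
    have : ∏ u ∈ (Finset.univ.erase v).erase w, h u (c u) = 1 := by
      apply Finset.prod_eq_one
      intro u hu
      simp only [Finset.mem_erase] at hu
      simp [hh, hu.1, hu.2.1]
    rw [this]
    simp [hh, hvw.symm]
  have claim2 : ∏ u, (∑ a, h u a) = (∑ a, φ a) * (∑ b, ψ b) * (n:ℝ)^(n-2) := by
    rw [← Finset.mul_prod_erase Finset.univ _ (Finset.mem_univ v),
        ← Finset.mul_prod_erase _ _ hw]
    have : ∏ u ∈ (Finset.univ.erase v).erase w, (∑ a, h u a) = (n:ℝ)^(n-2) := by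
      rw [Finset.prod_congr rfl (g := fun _ => (n:ℝ)) ?_]
      · rw [Finset.prod_const, hcard]
      · intro u hu
        simp only [Finset.mem_erase] at hu
        simp [hh, hu.1, hu.2.1]
    rw [this]
    simp [hh, hvw.symm]
    ring
  calc ∑ c : Fin n → Fin n, φ (c v) * ψ (c w)
      = ∑ c : Fin n → Fin n, ∏ u, h u (c u) := by
        exact Finset.sum_congr rfl fun c _ => (claim1 c).symm
    _ = ∏ u, (∑ a, h u a) := (Fintype.prod_sum _).symm
    _ = _ := by rw [claim2]; ring

lemma sum_diag' {n : ℕ} (φ ψ : Fin n → ℝ) (v : Fin n) :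
    ∑ c : Fin n → Fin n, φ (c v) * ψ (c v)
      = (n:ℝ)^(n-1) * (∑ a, φ a * ψ a) := by
  classical
  set h : Fin n → Fin n → ℝ := fun u a => if u = v then φ a * ψ a else 1 with hh
  have hcard : (Finset.univ.erase v).card = n - 1 := by
    rw [Finset.card_erase_of_mem (Finset.mem_univ v)]; simp
  have claim1 : ∀ c : Fin n → Fin n, ∏ u, h u (c u) = φ (c v) * ψ (c v) := by
    intro c
    rw [← Finset.mul_prod_erase Finset.univ _ (Finset.mem_univ v)]
    have : ∏ u ∈ Finset.univ.erase v, h u (c u) = 1 := by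
      apply Finset.prod_eq_one
      intro u hu
      simp only [Finset.mem_erase] at hu
      simp [hh, hu.1]
    rw [this]
    simp [hh]
  have claim2 : ∏ u, (∑ a, h u a) = (∑ a, φ a * ψ a) * (n:ℝ)^(n-1) := by
    rw [← Finset.mul_prod_erase Finset.univ _ (Finset.mem_univ v)]
    have : ∏ u ∈ Finset.univ.erase v, (∑ a, h u a) = (n:ℝ)^(n-1) := by
      rw [Finset.prod_congr rfl (g := fun _ => (n:ℝ)) ?_]
      · rw [Finset.prod_const, hcard]
      · intro u hu
        simp only [Finset.mem_erase] at hu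
        simp [hh, hu.1]
    rw [this]
    simp [hh]
  calc ∑ c : Fin n → Fin n, φ (c v) * ψ (c v)
      = ∑ c : Fin n → Fin n, ∏ u, h u (c u) :=
        Finset.sum_congr rfl fun c _ => (claim1 c).symm
    _ = ∏ u, (∑ a, h u a) := (Fintype.prod_sum _).symm
    _ = _ := by rw [claim2]; ring

lemma final_ineq' (nn a b c : ℝ) (hn : 0 < nn) (ha : 0 ≤ a) (hb : 0 ≤ b) (hc : 0 ≤ c)
    (hs : a + b + c = nn) :
    ((nn:ℝ)^2)⁻¹ * ((nn*a - c*a)*(nn*c - a*c) - b*(a*c)) ≤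
      (1 - (a + c)/(2*nn)) * (a*c) := by
  rw [inv_mul_le_iff₀ (by positivity)]
  have h1 : (1 - (a + c)/(2*nn)) * (a*c) * nn^2
      = (nn^2 - (a+c)*nn/2) * (a*c) := by
    field_simp
  rw [mul_comm ((nn:ℝ)^2), h1]
  have key : a*c ≤ (a+c)*nn/2 + b := by
    nlinarith [sq_nonneg (a-c), mul_nonneg (add_nonneg ha hc) hb,
      mul_nonneg (add_nonneg ha hc) hn.le]
  nlinarith [mul_le_mul_of_nonneg_left key (mul_nonneg ha hc)]

lemma count_cast (n : ℕ) (i : ℤ) (x : Fin n → ℤ) :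
    ((count n i x : ℝ)) = ∑ v, if x v = i then (1:ℝ) else 0 := by
  classical
  rw [count, Finset.card_filter, Nat.cast_sum]
  simp

end Aux

/-- **Drift of `N₁·N₃` for synchronous incremental voting on `K_n` with opinions in
`{1,2,3}`**: `E[N₁'·N₃' | X] ≤ (1 − (N₁+N₃)/(2n))·N₁·N₃`. -/
theorem product_drift_three_opinions
    (n : ℕ) [NeZero n] (x : Fin n → ℤ) (hx : ∀ v, x v ∈ ({1, 2, 3} : Set ℤ)) :
    expVal (step n x) (fun y => (count n 1 y : ℝ) * (count n 3 y : ℝ)) ≤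
      (1 - ((count n 1 x : ℝ) + (count n 3 x : ℝ)) / (2 * n)) *
        ((count n 1 x : ℝ) * (count n 3 x : ℝ)) := by
  classical
  have hn0 : 0 < n := Nat.pos_of_ne_zero (NeZero.ne n)
  set A : ℝ := (count n 1 x : ℝ) with hA
  set B : ℝ := (count n 2 x : ℝ) with hB
  set C : ℝ := (count n 3 x : ℝ) with hC
  have hA0 : 0 ≤ A := by positivity
  have hB0 : 0 ≤ B := by positivity
  have hC0 : 0 ≤ C := by positivity
  -- partition: A + B + C = n
  have hmem : ∀ v, x v = 1 ∨ x v = 2 ∨ x v = 3 := by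
    intro v; have := hx v; simpa using this
  have hsum : A + B + C = (n : ℝ) := by
    rw [hA, hB, hC, count_cast, count_cast, count_cast,
      ← Finset.sum_add_distrib, ← Finset.sum_add_distrib]
    rw [Finset.sum_congr rfl (g := fun _ => (1:ℝ)) ?_]
    · simp
    · intro v _
      rcases hmem v with h | h | h <;> simp [h]
  -- the indicator functions
  set F : Fin n → Fin n → ℝ :=
    fun v a => if updateRule (x v) (x a) = 1 then (1:ℝ) else 0 with hF
  set G : Fin n → Fin n → ℝ :=
    fun v a => if updateRule (x v) (x a) = 3 then (1:ℝ) else 0 with hG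
  have hcount1 : ∀ c : Fin n → Fin n,
      ((count n 1 (fun u => updateRule (x u) (x (c u))) : ℝ)) = ∑ v, F v (c v) := by
    intro c; rw [count_cast]
  have hcount3 : ∀ c : Fin n → Fin n,
      ((count n 3 (fun u => updateRule (x u) (x (c u))) : ℝ)) = ∑ v, G v (c v) := by
    intro c; rw [count_cast]
  -- row sums
  have hSf : ∀ v, (∑ a, F v a) = if x v = 3 then 0 else A := by
    intro v
    rcases hmem v with h | h | h
    · rw [if_neg (by rw [h]; decide), hA, count_cast]
      refine Finset.sum_congr rfl fun a _ => ?_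
      rcases hmem a with ha | ha | ha <;> simp [hF, updateRule, h, ha]
    · rw [if_neg (by rw [h]; decide), hA, count_cast]
      refine Finset.sum_congr rfl fun a _ => ?_
      rcases hmem a with ha | ha | ha <;> simp [hF, updateRule, h, ha]
    · rw [if_pos h]
      refine Finset.sum_eq_zero fun a _ => ?_
      rcases hmem a with ha | ha | ha <;> simp [hF, updateRule, h, ha]
  have hSg : ∀ v, (∑ a, G v a) = if x v = 1 then 0 else C := by
    intro v
    rcases hmem v with h | h | h
    · rw [if_pos h]
      refine Finset.sum_eq_zero fun a _ => ?_
      rcases hmem a with ha | ha | ha <;> simp [hG, updateRule, h, ha]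
    · rw [if_neg (by rw [h]; decide), hC, count_cast]
      refine Finset.sum_congr rfl fun a _ => ?_
      rcases hmem a with ha | ha | ha <;> simp [hG, updateRule, h, ha]
    · rw [if_neg (by rw [h]; decide), hC, count_cast]
      refine Finset.sum_congr rfl fun a _ => ?_
      rcases hmem a with ha | ha | ha <;> simp [hG, updateRule, h, ha]
  have hFG : ∀ v a, F v a * G v a = 0 := by
    intro v a
    by_cases h1 : updateRule (x v) (x a) = 1
    · by_cases h2 : updateRule (x v) (x a) = 3
      · omega
      · simp [hF, hG, h2]
    · simp [hF, hG, h1]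
  -- the expectation as a finite sum
  have hstep : expVal (step n x) (fun y => (count n 1 y : ℝ) * (count n 3 y : ℝ))
      = ((n:ℝ)^n)⁻¹ *
        ∑ c : Fin n → Fin n, ((∑ v, F v (c v)) * (∑ w, G w (c w))) := by
    rw [step, expVal_map', Finset.mul_sum]
    refine Finset.sum_congr rfl fun c _ => ?_
    rw [hcount1 c, hcount3 c]
    congr 1
    simp [PMF.uniformOfFintype_apply, ENNReal.toReal_inv]
  rw [hstep]
  -- evaluate the big sum
  have hbig : ∑ c : Fin n → Fin n, ((∑ v, F v (c v)) * (∑ w, G w (c w)))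
      = (n:ℝ)^(n-2) *
        (((n:ℝ)*A - C*A) * ((n:ℝ)*C - A*C) - B*(A*C)) := by
    have e1 : ∀ c : Fin n → Fin n, (∑ v, F v (c v)) * (∑ w, G w (c w))
        = ∑ v, ∑ w, F v (c v) * G w (c w) := fun c => Finset.sum_mul_sum _ _ _ _
    rw [Finset.sum_congr rfl (fun c _ => e1 c), Finset.sum_comm]
    have e2 : ∀ v, ∑ c : Fin n → Fin n, ∑ w, F v (c v) * G w (c w)
        = ∑ w, ∑ c : Fin n → Fin n, F v (c v) * G w (c w) := fun v => Finset.sum_comm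
    rw [Finset.sum_congr rfl (fun v _ => e2 v)]
    have e3 : ∀ v w, (∑ c : Fin n → Fin n, F v (c v) * G w (c w))
        = if v = w then 0 else (n:ℝ)^(n-2) * ((∑ a, F v a) * (∑ b, G w b)) := by
      intro v w
      by_cases hvw : v = w
      · subst hvw
        rw [if_pos rfl, sum_diag' (F v) (G v) v]
        rw [Finset.sum_congr rfl (fun a _ => hFG v a)]
        simp
      · rw [if_neg hvw, sum_pair' (F v) (G w) hvw]
    simp_rw [e3]
    have e4 : ∀ v, ∑ w, (if v = w then (0:ℝ)
        else (n:ℝ)^(n-2) * ((∑ a, F v a) * (∑ b, G w b)))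
        = (n:ℝ)^(n-2) * ((∑ a, F v a) * (∑ w, ∑ b, G w b)
            - (∑ a, F v a) * (∑ b, G v b)) := by
      intro v
      have : ∀ w, (if v = w then (0:ℝ)
          else (n:ℝ)^(n-2) * ((∑ a, F v a) * (∑ b, G w b)))
          = (n:ℝ)^(n-2) * ((∑ a, F v a) * (∑ b, G w b))
            - (if v = w then (n:ℝ)^(n-2) * ((∑ a, F v a) * (∑ b, G w b)) else 0) := by
        intro w; split <;> simp
      rw [Finset.sum_congr rfl (fun w _ => this w), Finset.sum_sub_distrib,
        Finset.sum_ite_eq Finset.univ v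
          (fun w => (n:ℝ)^(n-2) * ((∑ a, F v a) * (∑ b, G w b)))]
      simp [Finset.mul_sum, mul_sub]
    rw [Finset.sum_congr rfl (fun v _ => e4 v), ← Finset.mul_sum]
    congr 1
    -- now pure row-sum computations
    have hSfSum : ∑ v, (∑ a, F v a) = (n:ℝ)*A - C*A := by
      rw [Finset.sum_congr rfl (fun v _ => hSf v)]
      have t1 : ∀ v : Fin n, (if x v = 3 then (0:ℝ) else A)
          = A - (if x v = 3 then A else 0) := by intro v; split <;> simp
      rw [Finset.sum_congr rfl (fun v _ => t1 v), Finset.sum_sub_distrib,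
        Finset.sum_const, Finset.card_univ, Fintype.card_fin, nsmul_eq_mul]
      have t2 : ∑ v : Fin n, (if x v = 3 then (A:ℝ) else 0) = C * A := by
        rw [← Finset.sum_filter, Finset.sum_const, nsmul_eq_mul, hC, count_cast,
          ← Finset.sum_filter, Finset.sum_const, nsmul_eq_mul, mul_one]
      rw [t2]
    have hSgSum : ∑ w, (∑ b, G w b) = (n:ℝ)*C - A*C := by
      rw [Finset.sum_congr rfl (fun v _ => hSg v)]
      have t1 : ∀ v : Fin n, (if x v = 1 then (0:ℝ) else C)
          = C - (if x v = 1 then C else 0) := by intro v; split <;> simp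
      rw [Finset.sum_congr rfl (fun v _ => t1 v), Finset.sum_sub_distrib,
        Finset.sum_const, Finset.card_univ, Fintype.card_fin, nsmul_eq_mul]
      have t2 : ∑ v : Fin n, (if x v = 1 then (C:ℝ) else 0) = A * C := by
        rw [← Finset.sum_filter, Finset.sum_const, nsmul_eq_mul, hA, count_cast,
          ← Finset.sum_filter, Finset.sum_const, nsmul_eq_mul, mul_one]
      rw [t2]
    have hDiag : ∑ v, (∑ a, F v a) * (∑ b, G v b) = B*(A*C) := by
      have : ∀ v : Fin n, (∑ a, F v a) * (∑ b, G v b)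
          = if x v = 2 then A*C else 0 := by
        intro v
        rw [hSf v, hSg v]
        rcases hmem v with h | h | h <;> simp [h]
      rw [Finset.sum_congr rfl (fun v _ => this v), ← Finset.sum_filter,
        Finset.sum_const, nsmul_eq_mul]
      rw [hB, count_cast, ← Finset.sum_filter, Finset.sum_const, nsmul_eq_mul]
      ring
    rw [← hSfSum, ← hSgSum, ← hDiag, Finset.sum_sub_distrib, ← Finset.sum_mul]
  rw [hbig]
  -- final algebra, splitting on n = 1
  rcases Nat.lt_or_ge n 2 with hn2 | hn2
  · -- n = 1
    have hn1 : n = 1 := by omega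
    subst hn1
    have hAC : A * C = 0 := by
      rcases hmem 0 with h | h | h
      · have : count 1 3 x = 0 := by
          rw [count, Finset.card_eq_zero, Finset.filter_eq_empty_iff]
          intro v _
          have hv : v = 0 := Subsingleton.elim v 0
          rw [hv, h]; decide
        rw [hC, this, Nat.cast_zero, mul_zero]
      · have : count 1 3 x = 0 := by
          rw [count, Finset.card_eq_zero, Finset.filter_eq_empty_iff]
          intro v _
          have hv : v = 0 := Subsingleton.elim v 0
          rw [hv, h]; decide
        rw [hC, this, Nat.cast_zero, mul_zero]
      · have : count 1 1 x = 0 := by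
          rw [count, Finset.card_eq_zero, Finset.filter_eq_empty_iff]
          intro v _
          have hv : v = 0 := Subsingleton.elim v 0
          rw [hv, h]; decide
        rw [hA, this, Nat.cast_zero, zero_mul]
    have h1 : ((1:ℕ):ℝ)*A - C*A = A - C*A := by push_cast; ring
    have hexp : (((1:ℕ):ℝ)*A - C*A) * (((1:ℕ):ℝ)*C - A*C) - B*(A*C)
        = (A*C)*((1-C)*(1-A) - B) := by push_cast; ring
    rw [hexp, hAC, zero_mul, mul_zero, mul_zero]
    simp
  · have hpow : ((n:ℝ)^n)⁻¹ * (n:ℝ)^(n-2)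
        = (((n:ℝ))^2)⁻¹ := by
      have : (n:ℝ)^n = (n:ℝ)^(n-2) * (n:ℝ)^2 := by
        rw [← pow_add]; congr 1; omega
      rw [this]
      rw [mul_inv]
      rw [mul_comm, ← mul_assoc, mul_inv_cancel₀ (by positivity)]
      simp
    rw [← mul_assoc, hpow]
    exact final_ineq' (n:ℝ) A B C (by exact_mod_cast hn0) hA0 hB0 hC0 hsum


end KnSync12
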